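/- A group homomorphism χ : ℤ^(ℕ) → 𝕊 is continuous with respect to the topology τ of A_G(s) if and only if the sequence (χ(e_n))_{n∈ℕ} converges to 1 in 𝕊. In other words, the character group of A_G(s) is exactly c₀(𝕊), via the identification of χ with the sequence (χ(e_n)). -/

import Mathlib

open Filter Topology

noncomputable section

/-- `𝕊₊ = {z ∈ 𝕊 : Re z ≥ 0}`. -/
def SPlus : Set Circle := {z : Circle | 0 ≤ (z : ℂ).re}

/-- A character of an abelian group `G` is a homomorphism `G → 𝕊`. -/
def IsChar {G : Type*} [AddCommGroup G] (χ : G → Circle) : Prop :=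
  ∀ x y : G, χ (x + y) = χ x * χ y

/-- Two topologies on an abelian group `G` are *compatible* if they have the same
continuous characters `G → 𝕊`. -/
def Compatible {G : Type*} [AddCommGroup G] (t₁ t₂ : TopologicalSpace G) : Prop :=
  ∀ χ : G → Circle, IsChar χ →
    (@Continuous G Circle t₁ _ χ ↔ @Continuous G Circle t₂ _ χ)

/-- A subset `A` of a topological abelian group is *quasi-convex* if for every `g ∉ A`
there is a continuous character `χ` with `χ(A) ⊆ 𝕊₊` and `χ(g) ∉ 𝕊₊`. -/
def IsQuasiConvex {G : Type*} [AddCommGroup G] (t : TopologicalSpace G) (A : Set G) : Prop :=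
  ∀ g : G, g ∉ A → ∃ χ : G → Circle, IsChar χ ∧ @Continuous G Circle t _ χ ∧
    (∀ a ∈ A, χ a ∈ SPlus) ∧ χ g ∉ SPlus

/-- A topological abelian group is *locally quasi-convex* if it has a neighborhood base
at `0` consisting of quasi-convex sets. -/
def LocallyQuasiConvex {G : Type*} [AddCommGroup G] (t : TopologicalSpace G) : Prop :=
  ∀ U ∈ @nhds G t 0, ∃ V ∈ @nhds G t 0, V ⊆ U ∧ IsQuasiConvex t V

/-- The convergent sequence `s = {0} ∪ {1/n : n ∈ ℕ}` as a subspace of `ℝ`. -/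
def sSet : Set ℝ := {x : ℝ | x = 0 ∨ ∃ n : ℕ, 0 < n ∧ x = 1 / n}

/-- The natural map `s → ℤ^(ℕ)`, sending `0 ↦ 0` and `1/n ↦ e_n = single n 1`. -/
def sMap (x : sSet) : ℕ →₀ ℤ :=
  if (x : ℝ) = 0 then 0 else Finsupp.single ⌈(1 : ℝ) / (x : ℝ)⌉₊ 1

/-- The topology of the Graev free abelian topological group `A_G(s)`, i.e. the finest
group topology on `ℤ^(ℕ)` making `sMap : s → ℤ^(ℕ)` continuous.  In Mathlib's lattice of
(group) topologies `t ≤ s` means `t` is *finer* than `s`, so the finest such group topology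
is the `sInf` of the collection of all group topologies making `sMap` continuous; this
`sInf` itself makes `sMap` continuous, since `Continuous` into `t` means
`coinduced sMap _ ≤ t.toTopologicalSpace`, a condition preserved by `sInf`. -/
def tauGT : AddGroupTopology (ℕ →₀ ℤ) :=
  sInf {t : AddGroupTopology (ℕ →₀ ℤ) | @Continuous _ _ _ t.toTopologicalSpace sMap}

/-- The topology `τ` of `A_G(s)` on `ℤ^(ℕ)`. -/
def tau : TopologicalSpace (ℕ →₀ ℤ) := tauGT.toTopologicalSpace

lemma sMap_zero (x : sSet) (hx : (x : ℝ) = 0) : sMap x = 0 := if_pos hx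

lemma sMap_val {n : ℕ} (hn : 0 < n) (x : sSet) (hx : (x : ℝ) = 1 / n) :
    sMap x = Finsupp.single n 1 := by
  have hn' : (0:ℝ) < n := by exact_mod_cast hn
  have hx0 : (x : ℝ) ≠ 0 := by rw [hx]; positivity
  rw [sMap, if_neg hx0, hx, one_div_one_div, Nat.ceil_natCast]

lemma isolated {n : ℕ} (hn : 0 < n) (y : sSet) (hy : |(y:ℝ) - 1/n| < 1/(n*(n+1))) :
    (y : ℝ) = 1 / n := by
  have hn' : (1:ℝ) ≤ n := by exact_mod_cast hn
  rcases y.2 with h0 | ⟨m, hm, hym⟩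
  · exfalso
    rw [h0] at hy
    rw [abs_sub_lt_iff] at hy
    have := hy.2
    have h1 : 1/((n:ℝ)*(n+1)) ≤ 1/n := by
      apply one_div_le_one_div_of_le (by linarith)
      nlinarith
    linarith
  · rw [hym]
    have hm' : (1:ℝ) ≤ m := by exact_mod_cast hm
    rcases lt_trichotomy m n with h | h | h
    · exfalso
      have h' : (m:ℝ) + 1 ≤ n := by exact_mod_cast h
      rw [hym] at hy; rw [abs_sub_lt_iff] at hy
      have h2 := hy.1
      rw [div_sub_div _ _ (by linarith : (m:ℝ) ≠ 0) (by linarith : (n:ℝ) ≠ 0),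
        div_lt_div_iff₀ (by nlinarith) (by nlinarith)] at h2
      nlinarith [mul_le_mul_of_nonneg_right (show (1:ℝ) ≤ n-m by linarith)
        (show (0:ℝ) ≤ n*(n+1) by nlinarith)]
    · rw [h]
    · exfalso
      have h' : (n:ℝ) + 1 ≤ m := by exact_mod_cast h
      rw [hym] at hy; rw [abs_sub_lt_iff] at hy
      have h2 := hy.2
      rw [div_sub_div _ _ (by linarith : (n:ℝ) ≠ 0) (by linarith : (m:ℝ) ≠ 0),
        div_lt_div_iff₀ (by nlinarith) (by nlinarith)] at h2
      nlinarith [mul_nonneg (show (0:ℝ) ≤ m-n-1 by linarith) (show (0:ℝ) ≤ (n:ℝ) by linarith)]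

lemma isChar_zero' {G : Type*} [AddCommGroup G] {χ : G → Circle}
    (hχ : ∀ x y : G, χ (x + y) = χ x * χ y) : χ 0 = 1 := by
  have h := hχ 0 0
  rw [add_zero] at h
  exact (left_eq_mul.mp h)

lemma charCont {χ : (ℕ →₀ ℤ) → Circle} (hχ : ∀ x y, χ (x + y) = χ x * χ y)
    (h : Tendsto (fun n : ℕ => χ (Finsupp.single n 1)) atTop (𝓝 (1 : Circle))) :
    Continuous (fun x : sSet => χ (sMap x)) := by
  rw [continuous_iff_continuousAt]
  intro x
  rcases x.2 with hx0 | ⟨n, hn, hxn⟩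
  · -- x = 0
    have hfx : χ (sMap x) = 1 := by rw [sMap_zero x hx0, isChar_zero' hχ]
    rw [ContinuousAt, hfx]
    intro U hU
    obtain ⟨N, hN⟩ := eventually_atTop.mp (h hU)
    rw [mem_map, mem_nhds_subtype]
    refine ⟨Metric.ball 0 (1/(N+1)), by
      rw [hx0]; exact Metric.ball_mem_nhds _ (by positivity), ?_⟩
    intro y hy
    simp only [Set.mem_preimage, Real.ball_eq_Ioo, Set.mem_Ioo] at hy
    rcases y.2 with hy0 | ⟨m, hm, hym⟩
    · simp only [Set.mem_preimage]
      rw [sMap_zero y hy0, isChar_zero' hχ]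
      exact mem_of_mem_nhds hU
    · simp only [Set.mem_preimage]
      rw [sMap_val hm y hym]
      apply hN
      have hm' : (0:ℝ) < m := by exact_mod_cast hm
      have h1 : (1:ℝ)/m < 1/(N+1) := by
        rw [hym] at hy; linarith [hy.2]
      have h2 : (N:ℝ)+1 < m := by
        rw [div_lt_div_iff₀ hm' (by positivity)] at h1
        linarith
      have : N + 1 < m := by exact_mod_cast h2
      omega
  · -- x = 1/n : isolated point
    have hsing : {x} ∈ 𝓝 x := by
      rw [mem_nhds_subtype]
      have hn' : (0:ℝ) < n := by exact_mod_cast hn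
      refine ⟨Metric.ball ((1:ℝ)/n) (1/(n*(n+1))), by
        rw [hxn]; exact Metric.ball_mem_nhds _ (by positivity), ?_⟩
      intro y hy
      simp only [Set.mem_preimage, Metric.mem_ball, Real.dist_eq] at hy
      have := isolated hn y hy
      exact Set.mem_singleton_iff.mpr (Subtype.ext (this.trans hxn.symm))
    intro U hU
    rw [mem_map]
    have hsub : {x} ⊆ (fun z : sSet => χ (sMap z)) ⁻¹' U := by
      intro y hy
      rw [Set.mem_singleton_iff] at hy
      rw [Set.mem_preimage, hy]
      exact mem_of_mem_nhds hU
    exact mem_of_superset hsing hsub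

theorem continuous_char_iff_c0' (χ : (ℕ →₀ ℤ) → Circle)
    (hχ : ∀ x y, χ (x + y) = χ x * χ y)
    (tau : TopologicalSpace (ℕ →₀ ℤ))
    (htau : tau = (sInf {t : AddGroupTopology (ℕ →₀ ℤ) |
      @Continuous _ _ _ t.toTopologicalSpace sMap}).toTopologicalSpace) :
    @Continuous _ _ tau _ χ ↔
      Tendsto (fun n : ℕ => χ (Finsupp.single n 1)) atTop (𝓝 (1 : Circle)) := by
  subst htau
  constructor
  · intro hcont
    -- sMap is continuous into the sInf topology
    have hsmap : @Continuous _ _ _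
        (sInf {t : AddGroupTopology (ℕ →₀ ℤ) |
          @Continuous _ _ _ t.toTopologicalSpace sMap}).toTopologicalSpace sMap := by
      rw [AddGroupTopology.toTopologicalSpace_sInf, continuous_sInf_rng]
      rintro _ ⟨t', ht', rfl⟩
      exact ht'
    -- the sequence 1/(n+1) in sSet tends to 0
    set g : ℕ → sSet := fun n => ⟨1/((n:ℝ)+1), Or.inr ⟨n+1, Nat.succ_pos n, by push_cast; ring⟩⟩
    have hg : Tendsto g atTop (𝓝 (⟨0, Or.inl rfl⟩ : sSet)) := by
      rw [tendsto_subtype_rng]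
      exact tendsto_one_div_add_atTop_nhds_zero_nat
    have hcs : Continuous (fun x : sSet => χ (sMap x)) :=
      @Continuous.comp sSet (ℕ →₀ ℤ) Circle _
        ((sInf {t : AddGroupTopology (ℕ →₀ ℤ) |
          @Continuous _ _ _ t.toTopologicalSpace sMap}).toTopologicalSpace) _ sMap χ hcont hsmap
    have hcomp := (hcs.tendsto (⟨0, Or.inl rfl⟩ : sSet)).comp hg
    have h0 : χ (sMap (⟨0, Or.inl rfl⟩ : sSet)) = 1 := by
      rw [sMap_zero _ rfl, isChar_zero' hχ]
    rw [h0] at hcomp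
    have heq : (fun n : ℕ => χ (Finsupp.single (n+1) 1)) =
        (χ ∘ sMap) ∘ g := by
      funext n
      simp only [Function.comp_apply]
      rw [sMap_val (Nat.succ_pos n) (g n) (by push_cast; ring)]
    have h1 : Tendsto (fun n : ℕ => χ (Finsupp.single (n+1) 1)) atTop (𝓝 1) := by
      rw [heq]; exact hcomp
    exact (tendsto_add_atTop_iff_nat 1).mp h1
  · intro h
    let t : TopologicalSpace (ℕ →₀ ℤ) :=
      TopologicalSpace.induced χ (inferInstance : TopologicalSpace Circle)
    have hχcont : @Continuous _ _ t _ χ := continuous_induced_dom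
    have hadd : @ContinuousAdd (ℕ →₀ ℤ) t _ := by
      refine @ContinuousAdd.mk _ t _ ?_
      rw [continuous_induced_rng]
      have h1 : @Continuous _ _ (@instTopologicalSpaceProd _ _ t t) _
          (fun p : (ℕ →₀ ℤ) × (ℕ →₀ ℤ) => χ p.1 * χ p.2) :=
        Continuous.mul
          (hχcont.comp (@continuous_fst _ _ t t))
          (hχcont.comp (@continuous_snd _ _ t t))
      convert h1 using 1
      funext p
      exact hχ p.1 p.2
    have hneg : @ContinuousNeg (ℕ →₀ ℤ) t _ := by
      refine @ContinuousNeg.mk _ t _ ?_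
      rw [continuous_induced_rng]
      have h1 : @Continuous _ _ t _ (fun x : ℕ →₀ ℤ => (χ x)⁻¹) := hχcont.inv
      convert h1 using 1
      funext x
      have h2 : χ x * χ (-x) = 1 := by
        rw [← hχ, add_neg_cancel, isChar_zero' hχ]
      exact eq_inv_of_mul_eq_one_left ((mul_comm _ _).trans h2)
    have haddgrp : @IsTopologicalAddGroup (ℕ →₀ ℤ) t _ :=
      { toContinuousAdd := hadd, toContinuousNeg := hneg }
    let T : AddGroupTopology (ℕ →₀ ℤ) :=
      { toTopologicalSpace := t, toIsTopologicalAddGroup := haddgrp }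
    have hTmem : T ∈ {t : AddGroupTopology (ℕ →₀ ℤ) |
        @Continuous _ _ _ t.toTopologicalSpace sMap} := by
      show @Continuous _ _ _ t sMap
      rw [continuous_induced_rng]
      exact charCont hχ h
    have hle : (sInf {t : AddGroupTopology (ℕ →₀ ℤ) |
        @Continuous _ _ _ t.toTopologicalSpace sMap}).toTopologicalSpace ≤ t :=
      AddGroupTopology.toTopologicalSpace_le.mpr (sInf_le hTmem)
    exact continuous_le_dom hle hχcont

/-- A group homomorphism `χ : ℤ^(ℕ) → 𝕊` is `τ`-continuous iff `χ(e_n) → 1`;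
i.e. the character group of `A_G(s)` is exactly `c₀(𝕊)` via `χ ↦ (χ(e_n))_n`. -/
theorem continuous_char_iff_c0 (χ : (ℕ →₀ ℤ) → Circle) (hχ : IsChar χ) :
    @Continuous _ _ tau _ χ ↔
      Tendsto (fun n : ℕ => χ (Finsupp.single n 1)) atTop (𝓝 (1 : Circle)) := by
  exact continuous_char_iff_c0' χ hχ tau rfl

end
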